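/- arXiv:1307.3634 — 2 statements merged into one kernel-verified Lean document; each statement's English description precedes it below -/
import Mathlib

section
/- Let X be a compact metric space, C(X) the space of continuous real functions with the sup norm, and let F : C(X) → ℝ be defined as F(u) = inf over a family of continuous affine functionals of u (in particular F is concave and 1-Lipschitz in sup norm). Suppose F is Gateaux differentiable at u* with differential given by a probability measure μ* (i.e. d/dt F(u* + tv)|_{t=0} = ∫ v dμ* for all v ∈ C(X)). Suppose H_N : X^N → ℝ are symmetric functions, x*_N ∈ X^N minimizes (H_N + Σᵢ u*(xᵢ))/N, and for every u ∈ C(X), lim_{N→∞} inf_{X^N} (H_N + Σᵢ u(xᵢ))/N = F(u* + u - u*) exists (i.e. the limit F(u) exists for all u). Then the empirical measures δ_N(x*_N) := (1/N) Σᵢ δ_{(x*_N)ᵢ} converge weakly to μ*. -/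
open Filter MeasureTheory

/-- convergence of empirical measures of minimizers of perturbed
Hamiltonians towards the Gateaux differential (abstract Fekete points lemma). -/
theorem empirical_measures_of_minimizers_converge
    {X : Type*} [MetricSpace X] [CompactSpace X] [Nonempty X]
    [MeasurableSpace X] [BorelSpace X]
    (F : C(X, ℝ) → ℝ)
    (hconc : ConcaveOn ℝ Set.univ F) (hlip : LipschitzWith 1 F)
    (ustar : C(X, ℝ))
    (μstar : Measure X) [IsProbabilityMeasure μstar]
    (hGateaux : ∀ v : C(X, ℝ),
      HasDerivAt (fun t : ℝ => F (ustar + t • v)) (∫ x, v x ∂μstar) 0)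
    (H : ∀ N : ℕ, (Fin N → X) → ℝ)
    (hsymm : ∀ N (σ : Equiv.Perm (Fin N)) (x : Fin N → X),
      H N (fun i => x (σ i)) = H N x)
    (xstar : ∀ N : ℕ, Fin N → X)
    (hmin : ∀ N (y : Fin N → X),
      H N (xstar N) + ∑ i, ustar ((xstar N) i) ≤ H N y + ∑ i, ustar (y i))
    (hlim : ∀ u : C(X, ℝ),
      Tendsto (fun N : ℕ => ⨅ y : Fin N → X, (H N y + ∑ i, u (y i)) / N)
        atTop (nhds (F u))) :
    ∀ v : C(X, ℝ),
      Tendsto (fun N : ℕ => (∑ i, v ((xstar N) i)) / N) atTop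
        (nhds (∫ x, v x ∂μstar)) := by
  intro v
  set L : ℝ := ∫ x, v x ∂μstar with hL
  -- helper: division by a nonnegative number is monotone
  have mydiv : ∀ {a b c : ℝ}, a ≤ b → 0 ≤ c → a / c ≤ b / c := by
    intro a b c h hc
    rcases hc.eq_or_lt with rfl | hc
    · simp
    · gcongr
  -- sup-norm bounds
  have hnorm : ∀ (u : C(X, ℝ)) (x : X), |u x| ≤ ‖u‖ := fun u x => by
    simpa [Real.norm_eq_abs] using u.norm_coe_le_norm x
  -- the infima are well defined
  have hBdd : ∀ (N : ℕ) (u : C(X, ℝ)),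
      BddBelow (Set.range fun y : Fin N → X => (H N y + ∑ i, u (y i)) / N) := by
    intro N u
    refine ⟨(H N (xstar N) + ∑ i, ustar (xstar N i) - N * ‖ustar‖ - N * ‖u‖) / N, ?_⟩
    rintro _ ⟨y, rfl⟩
    have h1 : ∑ i, ustar (y i) ≤ N * ‖ustar‖ := by
      calc ∑ i, ustar (y i) ≤ ∑ _i : Fin N, ‖ustar‖ :=
            Finset.sum_le_sum fun i _ => (abs_le.mp (hnorm ustar (y i))).2
        _ = N * ‖ustar‖ := by simp [Finset.sum_const, mul_comm]
    have h2 : ∑ _i : Fin N, -‖u‖ ≤ ∑ i, u (y i) :=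
      Finset.sum_le_sum fun i _ => (abs_le.mp (hnorm u (y i))).1
    have h2' : -(N * ‖u‖) ≤ ∑ i, u (y i) := by
      simpa [Finset.sum_const, mul_comm] using h2
    have h3 := hmin N y
    exact mydiv (by linarith) (Nat.cast_nonneg N)
  -- notation
  set a : ℕ → ℝ := fun N => (∑ i, v (xstar N i)) / N with ha
  let I : ℕ → C(X, ℝ) → ℝ := fun N u => ⨅ y : Fin N → X, (H N y + ∑ i, u (y i)) / N
  have hlimI : ∀ u, Tendsto (fun N => I N u) atTop (nhds (F u)) := hlim
  have hAle : ∀ (N : ℕ) (u : C(X, ℝ)),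
      I N u ≤ (H N (xstar N) + ∑ i, u (xstar N i)) / N :=
    fun N u => ciInf_le (hBdd N u) (xstar N)
  have hBge : ∀ N : ℕ, (H N (xstar N) + ∑ i, ustar (xstar N i)) / N ≤ I N ustar :=
    fun N => le_ciInf fun y => mydiv (hmin N y) (Nat.cast_nonneg N)
  have hsum : ∀ (N : ℕ) (x : Fin N → X) (t : ℝ),
      (∑ i, (ustar + t • v) (x i)) = ∑ i, ustar (x i) + t * ∑ i, v (x i) := by
    intro N x t
    simp [Finset.sum_add_distrib, Finset.mul_sum]
  -- the key inequality
  have hkey : ∀ (t : ℝ) (N : ℕ), I N (ustar + t • v) ≤ I N ustar + t * a N := by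
    intro t N
    calc I N (ustar + t • v)
        ≤ (H N (xstar N) + ∑ i, (ustar + t • v) (xstar N i)) / N := hAle N _
      _ = (H N (xstar N) + ∑ i, ustar (xstar N i)) / N + t * a N := by
          rw [hsum, ← add_assoc, add_div, mul_div_assoc]
      _ ≤ I N ustar + t * a N := add_le_add (hBge N) le_rfl
  -- the slope of F at ustar in direction v converges to L
  have hslope : Tendsto (fun t : ℝ => (F (ustar + t • v) - F ustar) / t)
      (nhdsWithin (0 : ℝ) {(0 : ℝ)}ᶜ) (nhds L) := by
    have h := hasDerivAt_iff_tendsto_slope.mp (hGateaux v)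
    refine h.congr fun t => ?_
    simp [slope_def_field, sub_zero]
  -- quotient sequences converge to the slope
  have hq : ∀ t : ℝ, Tendsto (fun N => (I N (ustar + t • v) - I N ustar) / t)
      atTop (nhds ((F (ustar + t • v) - F ustar) / t)) :=
    fun t => ((hlimI _).sub (hlimI ustar)).div_const t
  refine tendsto_order.2 ⟨fun b hb => ?_, fun b hb => ?_⟩
  · -- b < L : pick t > 0 with slope > b
    have h1 : ∀ᶠ t in nhdsWithin (0 : ℝ) (Set.Ioi 0),
        b < (F (ustar + t • v) - F ustar) / t :=
      (hslope.mono_left (nhdsWithin_mono 0 (fun x (hx : x ∈ Set.Ioi (0:ℝ)) => Set.mem_compl_singleton_iff.mpr (Set.mem_Ioi.mp hx).ne'))).eventually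
        (eventually_gt_nhds hb)
    obtain ⟨t, hbt, ht⟩ := (h1.and self_mem_nhdsWithin).exists
    have hqa : ∀ N, (I N (ustar + t • v) - I N ustar) / t ≤ a N := by
      intro N
      rw [div_le_iff₀ ht]
      have := hkey t N
      linarith [mul_comm t (a N)]
    filter_upwards [(hq t).eventually (eventually_gt_nhds hbt)] with N hN
    exact lt_of_lt_of_le hN (hqa N)
  · -- L < b : pick t < 0 with slope < b
    have h1 : ∀ᶠ t in nhdsWithin (0 : ℝ) (Set.Iio 0),
        (F (ustar + t • v) - F ustar) / t < b :=
      (hslope.mono_left (nhdsWithin_mono 0 (fun x (hx : x ∈ Set.Iio (0:ℝ)) => Set.mem_compl_singleton_iff.mpr (Set.mem_Iio.mp hx).ne))).eventually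
        (eventually_lt_nhds hb)
    obtain ⟨t, hbt, ht⟩ := (h1.and self_mem_nhdsWithin).exists
    have hqa : ∀ N, a N ≤ (I N (ustar + t • v) - I N ustar) / t := by
      intro N
      rw [le_div_iff_of_neg ht]
      have := hkey t N
      linarith [mul_comm t (a N)]
    filter_upwards [(hq t).eventually (eventually_lt_nhds hbt)] with N hN
    exact lt_of_le_of_lt (hqa N) hN
end

section
/- Let f be holomorphic on the open unit disc in ℂ, and let φ : Δ → ℝ be a C¹ function satisfying |∂φ/∂z| ≤ C/|z| on the punctured disc. Fix z₀ with 0 < |z₀| < 1/2 and 0 < δ < 1/2, and set r₀ := δ|z₀|. Then for any k ≥ 1: |f(z₀)|² e^{-(k-1)φ(z₀)} ≤ δ^{-2} |z₀|^{-2} e^{2C'δ(k-1)} · (1/π) ∫_{|z - z₀| < r₀} |f(z)|² e^{-(k-1)φ(z)} dλ(z), where C' is a constant depending only on C. -/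
open MeasureTheory Metric
open Real Set

lemma circle_submean (g : ℂ → ℂ) (c : ℂ) (r : ℝ) (hr : 0 < r)
    (hg : DifferentiableOn ℂ g (ball (0:ℂ) 1)) (hsub : closedBall c r ⊆ ball (0:ℂ) 1) :
    2 * π * ‖g c‖ ≤ ∫ θ in Ioo (-π) π, ‖g (circleMap c r θ)‖ := by
  have hcont : ContinuousOn g (closedBall c r) := (hg.continuousOn).mono hsub
  have hdiff : ∀ z ∈ ball c r \ (∅ : Set ℂ), DifferentiableAt ℂ g z := by
    intro z hz
    exact (hg.differentiableAt (isOpen_ball.mem_nhds (hsub (ball_subset_closedBall hz.1)))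
      : DifferentiableAt ℂ g z)
  have key := Complex.circleIntegral_sub_center_inv_smul_of_differentiable_on_off_countable hr
    Set.countable_empty hcont hdiff
  have hnorm : ‖(2 * π * Complex.I : ℂ) • g c‖ = 2 * π * ‖g c‖ := by
    simp [norm_smul, abs_of_pos Real.pi_pos]
  have hle : 2 * π * ‖g c‖ ≤ ∫ θ in (0:ℝ)..(2*π), ‖g (circleMap c r θ)‖ := by
    rw [← hnorm, ← key]
    have := intervalIntegral.norm_integral_le_integral_norm (a := 0) (b := 2*π)
      (f := fun θ => deriv (circleMap c r) θ • (circleMap c r θ - c)⁻¹ • g (circleMap c r θ))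
      (μ := volume) (by positivity)
    refine this.trans (le_of_eq ?_)
    apply intervalIntegral.integral_congr
    intro θ _
    simp only [deriv_circleMap, circleMap_sub_center, norm_smul, norm_inv]
    simp [norm_circleMap_zero, abs_of_pos hr]
    field_simp
  have hper : Function.Periodic (fun θ => ‖g (circleMap c r θ)‖) (2*π) := fun θ => by
    simp [(periodic_circleMap c r) θ]
  have := hper.intervalIntegral_add_eq 0 (-π)
  rw [zero_add] at this
  rw [this] at hle
  have : (-π) + 2*π = π := by ring
  rw [this] at hle
  rw [intervalIntegral.integral_of_le (by linarith [Real.pi_pos])] at hle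
  rwa [← integral_Ioc_eq_integral_Ioo]

lemma area_submean (f : ℂ → ℂ) (hf : DifferentiableOn ℂ f (ball (0:ℂ) 1)) (z₀ : ℂ) (r₀ : ℝ)
    (hr : 0 < r₀) (hsub : closedBall z₀ r₀ ⊆ ball (0:ℂ) 1) :
    π * r₀ ^ 2 * ‖f z₀‖ ^ 2 ≤ ∫ z in ball z₀ r₀, ‖f z‖ ^ 2 := by
  set g : ℂ → ℂ := fun z => f z * f z with hg_def
  have hgnorm : ∀ z, ‖g z‖ = ‖f z‖ ^ 2 := fun z => by simp [hg_def, sq]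
  have hg : DifferentiableOn ℂ g (ball (0:ℂ) 1) := hf.mul hf
  have hgc : ContinuousOn g (closedBall z₀ r₀) := hg.continuousOn.mono hsub
  -- step 1: translate
  have step1 : (∫ z in ball z₀ r₀, ‖f z‖ ^ 2) = ∫ z in ball (0:ℂ) r₀, ‖g (z₀ + z)‖ := by
    have : (∫ z in ball z₀ r₀, ‖f z‖ ^ 2) = ∫ z in ball z₀ r₀, ‖g z‖ := by
      refine setIntegral_congr_fun measurableSet_ball fun z _ => (hgnorm z).symm
    rw [this, ← integral_indicator measurableSet_ball, ← integral_indicator measurableSet_ball]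
    rw [← integral_add_left_eq_self (μ := volume) (fun z => Set.indicator (ball z₀ r₀) (fun w => ‖g w‖) z) z₀]
    congr 1
    ext z
    by_cases hz : z ∈ ball (0:ℂ) r₀
    · have hz' : z₀ + z ∈ ball z₀ r₀ := by
        simpa [mem_ball, dist_eq_norm] using hz
      simp [Set.indicator_of_mem hz, Set.indicator_of_mem hz']
    · have hz' : z₀ + z ∉ ball z₀ r₀ := by
        simp only [mem_ball, dist_eq_norm] at hz ⊢
        simpa using hz
      simp [Set.indicator_of_notMem hz, Set.indicator_of_notMem hz']
  set B : Set (ℝ × ℝ) := Ioo 0 r₀ ×ˢ Ioo (-π) π with hB_def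
  set F : ℝ × ℝ → ℝ := fun p => p.1 * ‖g (z₀ + Complex.polarCoord.symm p)‖ with hF_def
  -- continuity and integrability of F on B
  have hsymm_cont : Continuous (fun p : ℝ × ℝ => Complex.polarCoord.symm p) := by
    have : (fun p : ℝ × ℝ => Complex.polarCoord.symm p)
        = fun p : ℝ × ℝ => (p.1 : ℂ) * (Real.cos p.2 + Real.sin p.2 * Complex.I) := by
      ext p : 1; rw [Complex.polarCoord_symm_apply]
    rw [this]; continuity
  have hK : IsCompact ((Icc (0:ℝ) r₀) ×ˢ (Icc (-π) π)) := isCompact_Icc.prod isCompact_Icc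
  have hmaps : ∀ p ∈ (Icc (0:ℝ) r₀) ×ˢ (Icc (-π) π), z₀ + Complex.polarCoord.symm p ∈ closedBall z₀ r₀ := by
    rintro ⟨r, θ⟩ ⟨hr1, _⟩
    simp only [mem_closedBall, dist_eq_norm, add_sub_cancel_left, Complex.norm_polarCoord_symm]
    rw [abs_of_nonneg hr1.1]; exact hr1.2
  have hFcont : ContinuousOn F ((Icc (0:ℝ) r₀) ×ˢ (Icc (-π) π)) := by
    refine continuous_fst.continuousOn.mul (ContinuousOn.norm ?_)
    exact hgc.comp (continuous_const.add hsymm_cont).continuousOn hmaps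
  have hBK : B ⊆ (Icc (0:ℝ) r₀) ×ˢ (Icc (-π) π) :=
    Set.prod_mono Ioo_subset_Icc_self Ioo_subset_Icc_self
  have hIntF : IntegrableOn F B volume :=
    (hFcont.integrableOn_compact hK).mono_set hBK
  -- step 2: polar coordinates
  have step2 : (∫ z in ball (0:ℂ) r₀, ‖g (z₀ + z)‖) = ∫ p in B, F p := by
    set H : ℂ → ℝ := Set.indicator (ball (0:ℂ) r₀) (fun z => ‖g (z₀ + z)‖) with hH_def
    have hpolar := Complex.integral_comp_polarCoord_symm H
    rw [← integral_indicator measurableSet_ball, ← hpolar]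
    have htargeq : polarCoord.target = Ioi (0:ℝ) ×ˢ Ioo (-π) π := rfl
    have htarget : MeasurableSet polarCoord.target := by
      rw [htargeq]; exact measurableSet_Ioi.prod measurableSet_Ioo
    have hBsub : B ⊆ polarCoord.target := by
      rw [htargeq]
      exact Set.prod_mono Ioo_subset_Ioi_self le_rfl
    rw [setIntegral_eq_of_subset_of_forall_diff_eq_zero htarget hBsub ?_]
    · refine setIntegral_congr_fun (measurableSet_Ioo.prod measurableSet_Ioo) ?_
      rintro ⟨r, θ⟩ ⟨hr1, _⟩
      have hmem : Complex.polarCoord.symm (r, θ) ∈ ball (0:ℂ) r₀ := by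
        simp only [mem_ball, dist_zero_right, Complex.norm_polarCoord_symm]
        rw [abs_of_nonneg hr1.1.le]; exact hr1.2
      show (r, θ).1 • H (Complex.polarCoord.symm (r, θ)) = F (r, θ)
      rw [hH_def, Set.indicator_of_mem hmem, smul_eq_mul]
    · rintro ⟨r, θ⟩ ⟨hmem, hnot⟩
      rw [htargeq] at hmem
      have hr' : r₀ ≤ r := by
        by_contra h
        exact hnot ⟨⟨hmem.1, lt_of_not_ge h⟩, hmem.2⟩
      have hnmem : Complex.polarCoord.symm (r, θ) ∉ ball (0:ℂ) r₀ := by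
        simp only [mem_ball, dist_zero_right, Complex.norm_polarCoord_symm]
        rw [abs_of_nonneg (le_trans hr.le hr')]
        exact not_lt.2 hr'
      show (r, θ).1 • H (Complex.polarCoord.symm (r, θ)) = 0
      rw [hH_def, Set.indicator_of_notMem hnmem, smul_zero]
  -- step 3: Fubini
  have prodInt : Integrable F ((volume.restrict (Ioo (0:ℝ) r₀)).prod (volume.restrict (Ioo (-π) π))) := by
    rw [Measure.prod_restrict, ← Measure.volume_eq_prod ℝ ℝ]
    exact hIntF
  have step3 : (∫ p in B, F p) = ∫ r in Ioo (0:ℝ) r₀, ∫ θ in Ioo (-π) π, F (r, θ) := by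
    rw [hB_def, show (volume : Measure (ℝ × ℝ)) = (volume : Measure ℝ).prod volume from
      Measure.volume_eq_prod ℝ ℝ, ← Measure.prod_restrict]
    exact MeasureTheory.integral_prod F prodInt
  -- step 4: lower bound the inner integral
  have hmarg : IntegrableOn (fun r => ∫ θ in Ioo (-π) π, F (r, θ)) (Ioo (0:ℝ) r₀) volume :=
    prodInt.integral_prod_left
  have hLint : IntegrableOn (fun r : ℝ => 2 * π * ‖g z₀‖ * r) (Ioo (0:ℝ) r₀) volume :=
    (((continuous_const.mul continuous_id).continuousOn).integrableOn_compact
      isCompact_Icc).mono_set Ioo_subset_Icc_self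
  have hmono : ∀ r ∈ Ioo (0:ℝ) r₀, 2 * π * ‖g z₀‖ * r ≤ ∫ θ in Ioo (-π) π, F (r, θ) := by
    intro r hrm
    have hcirc : ∀ θ : ℝ, z₀ + Complex.polarCoord.symm (r, θ) = circleMap z₀ r θ := by
      intro θ
      rw [Complex.polarCoord_symm_apply, circleMap, Complex.exp_mul_I]
      push_cast
      ring
    have hsub' : closedBall z₀ r ⊆ ball (0:ℂ) 1 :=
      (closedBall_subset_closedBall hrm.2.le).trans hsub
    have := circle_submean g z₀ r hrm.1 hg hsub'
    calc 2 * π * ‖g z₀‖ * r ≤ (∫ θ in Ioo (-π) π, ‖g (circleMap z₀ r θ)‖) * r := by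
          exact mul_le_mul_of_nonneg_right this hrm.1.le
      _ = ∫ θ in Ioo (-π) π, F (r, θ) := by
          rw [← integral_mul_const]
          refine setIntegral_congr_fun measurableSet_Ioo fun θ _ => ?_
          simp only [hF_def, hcirc]
          ring
  have step4 : (∫ r in Ioo (0:ℝ) r₀, 2 * π * ‖g z₀‖ * r)
      ≤ ∫ r in Ioo (0:ℝ) r₀, ∫ θ in Ioo (-π) π, F (r, θ) :=
    setIntegral_mono_on hLint hmarg measurableSet_Ioo hmono
  -- compute the left integral
  have hcompute : (∫ r in Ioo (0:ℝ) r₀, 2 * π * ‖g z₀‖ * r) = π * r₀ ^ 2 * ‖f z₀‖ ^ 2 := by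
    rw [← integral_Ioc_eq_integral_Ioo, ← intervalIntegral.integral_of_le hr.le]
    rw [intervalIntegral.integral_const_mul, integral_id]
    rw [hgnorm z₀]
    ring
  rw [step1, step2, step3, ← hcompute]
  exact step4


/-- a weighted submean-value (Bernstein–Markov type) inequality for
holomorphic functions on the unit disc against a weight `φ` with `|∇φ(z)| ≤ C/|z|`. -/
theorem weighted_submean_inequality (C : ℝ) (hC : 0 < C) :
    ∃ C' : ℝ, 0 < C' ∧
      ∀ (f : ℂ → ℂ) (φ : ℂ → ℝ),
        DifferentiableOn ℂ f (ball (0 : ℂ) 1) →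
        ContDiffOn ℝ 1 φ (ball (0 : ℂ) 1) →
        (∀ z ∈ ball (0 : ℂ) 1, z ≠ 0 → ‖fderiv ℝ φ z‖ ≤ C / ‖z‖) →
        ∀ z₀ : ℂ, 0 < ‖z₀‖ → ‖z₀‖ < 1 / 2 →
        ∀ δ : ℝ, 0 < δ → δ < 1 / 2 →
        ∀ k : ℕ, 1 ≤ k →
          ‖f z₀‖ ^ 2 * Real.exp (-((k : ℝ) - 1) * φ z₀) ≤
            δ ^ (-(2 : ℝ)) * ‖z₀‖ ^ (-(2 : ℝ)) *
              Real.exp (2 * C' * δ * ((k : ℝ) - 1)) *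
              ((1 / Real.pi) *
                ∫ z in ball z₀ (δ * ‖z₀‖),
                  ‖f z‖ ^ 2 * Real.exp (-((k : ℝ) - 1) * φ z) ∂volume) := by
  refine ⟨C, hC, ?_⟩
  intro f φ hf hφ hbound z₀ hz₀ hz₀' δ hδ hδ' k hk
  set r₀ : ℝ := δ * ‖z₀‖ with hr₀_def
  have hr₀ : 0 < r₀ := mul_pos hδ hz₀
  set a : ℝ := (k : ℝ) - 1 with ha_def
  have ha : 0 ≤ a := by
    have : (1:ℝ) ≤ (k:ℝ) := by exact_mod_cast hk
    simp [ha_def]; linarith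
  -- the closed ball is inside the unit ball and away from 0
  have hsub : closedBall z₀ r₀ ⊆ ball (0:ℂ) 1 := by
    intro w hw
    simp only [mem_closedBall, dist_eq_norm] at hw
    simp only [mem_ball, dist_zero_right]
    have h1 : ‖w‖ ≤ ‖w - z₀‖ + ‖z₀‖ := by
      calc ‖w‖ = ‖w - z₀ + z₀‖ := by rw [sub_add_cancel]
        _ ≤ ‖w - z₀‖ + ‖z₀‖ := norm_add_le _ _
    nlinarith [norm_nonneg (w - z₀), norm_nonneg w]
  have hne : ∀ w ∈ ball z₀ r₀, ‖z₀‖ / 2 ≤ ‖w‖ := by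
    intro w hw
    simp only [mem_ball, dist_eq_norm] at hw
    have h1 : ‖z₀‖ - ‖w‖ ≤ ‖w - z₀‖ := by
      have := norm_sub_norm_le z₀ w
      rwa [norm_sub_rev] at this
    nlinarith
  -- oscillation bound
  have hosc : ∀ z ∈ ball z₀ r₀, φ z - φ z₀ ≤ 2 * C * δ := by
    intro z hz
    have hball_sub : ball z₀ r₀ ⊆ ball (0:ℂ) 1 := ball_subset_closedBall.trans hsub
    have hdiff : ∀ x ∈ ball z₀ r₀, DifferentiableAt ℝ φ x := fun x hx =>
      (hφ.differentiableOn one_ne_zero).differentiableAt (isOpen_ball.mem_nhds (hball_sub hx))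
    have hbd : ∀ x ∈ ball z₀ r₀, ‖fderiv ℝ φ x‖ ≤ 2 * C / ‖z₀‖ := by
      intro x hx
      have hxpos : 0 < ‖x‖ := lt_of_lt_of_le (by linarith) (hne x hx)
      have hx0 : x ≠ 0 := by
        intro h
        rw [h, norm_zero] at hxpos
        exact lt_irrefl _ hxpos
      refine (hbound x (hball_sub hx) hx0).trans ?_
      rw [div_le_div_iff₀ hxpos hz₀]
      have := hne x hx
      nlinarith
    have key := (convex_ball z₀ r₀).norm_image_sub_le_of_norm_fderiv_le hdiff hbd
      (mem_ball_self hr₀) hz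
    have h1 : ‖φ z - φ z₀‖ ≤ 2 * C / ‖z₀‖ * ‖z - z₀‖ := key
    have h2 : ‖z - z₀‖ ≤ r₀ := by
      simp only [mem_ball, dist_eq_norm] at hz; exact hz.le
    have h3 : φ z - φ z₀ ≤ ‖φ z - φ z₀‖ := le_abs_self _
    have h4 : 2 * C / ‖z₀‖ * ‖z - z₀‖ ≤ 2 * C / ‖z₀‖ * r₀ := by
      apply mul_le_mul_of_nonneg_left h2 (by positivity)
    have h5 : 2 * C / ‖z₀‖ * r₀ = 2 * C * δ := by
      rw [hr₀_def, div_mul_eq_mul_div, div_eq_iff hz₀.ne']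
      ring
    linarith
  -- integrability
  have hfc : ContinuousOn (fun z => ‖f z‖ ^ 2) (closedBall z₀ r₀) :=
    ((hf.continuousOn.mono hsub).norm).pow 2
  have hwc : ContinuousOn (fun z => ‖f z‖ ^ 2 * Real.exp (-a * φ z)) (closedBall z₀ r₀) :=
    hfc.mul ((Real.continuous_exp.comp_continuousOn
      ((continuousOn_const.mul (hφ.continuousOn.mono hsub)))))
  have hInt1 : IntegrableOn (fun z => ‖f z‖ ^ 2) (ball z₀ r₀) volume :=
    (hfc.integrableOn_compact (isCompact_closedBall _ _)).mono_set ball_subset_closedBall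
  have hInt2 : IntegrableOn (fun z => ‖f z‖ ^ 2 * Real.exp (-a * φ z)) (ball z₀ r₀) volume :=
    (hwc.integrableOn_compact (isCompact_closedBall _ _)).mono_set ball_subset_closedBall
  -- claim 1 : pointwise lower bound of the weighted integrand
  have claim1 : Real.exp (-a * φ z₀ - 2 * C * δ * a) * ∫ z in ball z₀ r₀, ‖f z‖ ^ 2
      ≤ ∫ z in ball z₀ r₀, ‖f z‖ ^ 2 * Real.exp (-a * φ z) := by
    rw [← integral_const_mul]
    refine setIntegral_mono_on (hInt1.const_mul _) hInt2 measurableSet_ball ?_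
    intro z hz
    have h1 : -a * φ z₀ - 2 * C * δ * a ≤ -a * φ z := by
      have := hosc z hz
      nlinarith
    calc Real.exp (-a * φ z₀ - 2 * C * δ * a) * ‖f z‖ ^ 2
        ≤ Real.exp (-a * φ z) * ‖f z‖ ^ 2 := by
          apply mul_le_mul_of_nonneg_right (Real.exp_le_exp.2 h1) (by positivity)
      _ = ‖f z‖ ^ 2 * Real.exp (-a * φ z) := by ring
  have claim2 := area_submean f hf z₀ r₀ hr₀ hsub
  -- power rewriting
  have hpow : δ ^ (-(2:ℝ)) * ‖z₀‖ ^ (-(2:ℝ)) = (r₀ ^ 2)⁻¹ := by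
    rw [← Real.mul_rpow hδ.le (norm_nonneg _), Real.rpow_neg (by positivity),
      show (2:ℝ) = ((2:ℕ):ℝ) by norm_num, Real.rpow_natCast]
  -- final computation
  have hI : Real.exp (-a * φ z₀ - 2 * C * δ * a) * (Real.pi * r₀ ^ 2 * ‖f z₀‖ ^ 2)
      ≤ ∫ z in ball z₀ r₀, ‖f z‖ ^ 2 * Real.exp (-a * φ z) := by
    refine le_trans ?_ claim1
    exact mul_le_mul_of_nonneg_left claim2 (Real.exp_nonneg _)
  rw [hpow]
  have hπ : (0:ℝ) < Real.pi := Real.pi_pos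
  have key : ‖f z₀‖ ^ 2 * Real.exp (-a * φ z₀)
      ≤ (r₀ ^ 2)⁻¹ * Real.exp (2 * C * δ * a) *
        ((1 / Real.pi) * ∫ z in ball z₀ r₀, ‖f z‖ ^ 2 * Real.exp (-a * φ z)) := by
    have h6 : (r₀ ^ 2)⁻¹ * Real.exp (2 * C * δ * a) * ((1 / Real.pi) *
        (Real.exp (-a * φ z₀ - 2 * C * δ * a) * (Real.pi * r₀ ^ 2 * ‖f z₀‖ ^ 2)))
        = ‖f z₀‖ ^ 2 * Real.exp (-a * φ z₀) := by
      rw [Real.exp_sub]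
      have h7 := Real.exp_ne_zero (2 * C * δ * a)
      field_simp
    calc ‖f z₀‖ ^ 2 * Real.exp (-a * φ z₀)
        = (r₀ ^ 2)⁻¹ * Real.exp (2 * C * δ * a) * ((1 / Real.pi) *
          (Real.exp (-a * φ z₀ - 2 * C * δ * a) * (Real.pi * r₀ ^ 2 * ‖f z₀‖ ^ 2))) := h6.symm
      _ ≤ (r₀ ^ 2)⁻¹ * Real.exp (2 * C * δ * a) *
          ((1 / Real.pi) * ∫ z in ball z₀ r₀, ‖f z‖ ^ 2 * Real.exp (-a * φ z)) := by
          apply mul_le_mul_of_nonneg_left _ (by positivity)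
          apply mul_le_mul_of_nonneg_left hI (by positivity)
  exact key
end
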